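/- For every policy π and every state s ∈ S, the value function satisfies the Bellman consistency equation: V_M^π(s) = ∫_A ( r(s,a) + γ ∫_S V_M^π(s') dT(s'|s,a) ) dπ(a|s). -/

import Mathlib

/-!
Formalization of an MDP `M = (S, A, T, r, μ₀, γ)`: measurable state space `S`, measurable
action space `A`, Markov transition kernel `T : Kernel (S × A) S`, bounded measurable reward
`r : S × A → ℝ`, initial distribution `μ₀`, discount `γ ∈ [0,1)`.  A policy is a Markov kernel
`π : Kernel S A`.  The trajectory distribution generated by `(μ₀, π, T)` via the
Ionescu–Tulcea construction has time-`t` state-action marginal given by iterating the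
one-step kernel; the value function `V_M^π` and expected return `η_M(π)` are expressed through
these marginals via `V_M^π(s) = ∑_t γ^t E[r(s_t, a_t)]` (Fubini applied to the discounted sum).
-/

open MeasureTheory ProbabilityTheory

set_option maxHeartbeats 1000000

variable {S A : Type*} [MeasurableSpace S] [MeasurableSpace A]

/-- Kernel sending a state `s` to the distribution of the pair `(s, a)` with `a ~ π(·|s)`. -/
noncomputable def stateAction (π : Kernel S A) [IsSFiniteKernel π] :
    Kernel S (S × A) :=
  Kernel.id ×ₖ π

/-- One step of the state-action Markov chain: from `(s, a)`, sample `s' ~ T(·|s, a)` and then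
`a' ~ π(·|s')`. -/
noncomputable def saStep (π : Kernel S A) [IsSFiniteKernel π] (T : Kernel (S × A) S) :
    Kernel (S × A) (S × A) :=
  (stateAction π) ∘ₖ T

/-- Distribution of the state-action pair `(s_t, a_t)` at time `t` as a kernel from the initial
state `s₀ = s`, for the Markov chain generated by policy `π` and dynamics `T` (the time-`t`
marginal of the Ionescu–Tulcea trajectory distribution with `a_t ~ π(·|s_t)`,
`s_{t+1} ~ T(·|s_t, a_t)`). -/
noncomputable def saDist (π : Kernel S A) [IsSFiniteKernel π] (T : Kernel (S × A) S) :
    ℕ → Kernel S (S × A)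
  | 0 => stateAction π
  | (n + 1) => (saStep π T) ∘ₖ saDist π T n

/-- The value function `V_M^π(s) = E[∑_t γ^t r(s_t, a_t)]` for trajectories started at `s`
under `(π, T)`. -/
noncomputable def value (π : Kernel S A) [IsSFiniteKernel π] (T : Kernel (S × A) S)
    (r : S × A → ℝ) (γ : ℝ) (s : S) : ℝ :=
  ∑' t : ℕ, γ ^ t * ∫ x, r x ∂(saDist π T t s)

/-- The expected return `η_M(π) = E_{s ~ μ₀}[V_M^π(s)]`. -/
noncomputable def expReturn (μ₀ : Measure S) (π : Kernel S A) [IsSFiniteKernel π]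
    (T : Kernel (S × A) S) (r : S × A → ℝ) (γ : ℝ) : ℝ :=
  ∫ s, value π T r γ s ∂μ₀

/-- The discounted expected uncertainty `ε_u(π) = ∑_t γ^t E_{T,μ₀}^π[u(s_t, a_t)]` over
trajectories generated by `(μ₀, π, T)`. -/
noncomputable def epsU (μ₀ : Measure S) (π : Kernel S A) [IsSFiniteKernel π]
    (T : Kernel (S × A) S) (u : S × A → ℝ) (γ : ℝ) : ℝ :=
  ∑' t : ℕ, γ ^ t * ∫ x, u x ∂(μ₀.bind (fun s => saDist π T t s))

/-! ### Auxiliary lemmas -/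

section Aux

lemma abs_integral_le_of_abs_le {α : Type*} [MeasurableSpace α] (μ : Measure α)
    [IsProbabilityMeasure μ] {f : α → ℝ} {C : ℝ} (h : ∀ x, |f x| ≤ C) :
    |∫ x, f x ∂μ| ≤ C := by
  have := norm_integral_le_of_norm_le_const (μ := μ) (f := f) (C := C)
    (Filter.Eventually.of_forall fun x => by simpa [Real.norm_eq_abs] using h x)
  simpa [Real.norm_eq_abs] using this

lemma integrable_of_abs_le {α : Type*} [MeasurableSpace α] (μ : Measure α)
    [IsProbabilityMeasure μ] {f : α → ℝ} (hf : AEStronglyMeasurable f μ) {C : ℝ}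
    (h : ∀ x, |f x| ≤ C) : Integrable f μ :=
  Integrable.mono' (integrable_const C) hf
    (Filter.Eventually.of_forall fun x => by simpa [Real.norm_eq_abs] using h x)

lemma integral_comp_of_bdd {α β δ : Type*} [MeasurableSpace α] [MeasurableSpace β]
    [MeasurableSpace δ]
    (κ : Kernel β δ) [IsMarkovKernel κ] (η : Kernel α β) [IsMarkovKernel η] (a : α)
    {f : δ → ℝ} (hf : Measurable f) {C : ℝ} (h : ∀ x, |f x| ≤ C) :
    ∫ x, f x ∂((κ ∘ₖ η) a) = ∫ b, ∫ x, f x ∂(κ b) ∂(η a) := by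
  rw [Kernel.comp_eq_snd_compProd, Kernel.snd_apply,
    integral_map measurable_snd.aemeasurable hf.aestronglyMeasurable,
    ProbabilityTheory.integral_compProd
      (integrable_of_abs_le (μ := (η ⊗ₖ Kernel.prodMkLeft α κ) a)
        (f := fun x : β × δ => f x.2)
        ((hf.comp measurable_snd).aestronglyMeasurable) (fun x => h x.2))]
  simp

instance stateAction.isMarkov (π : Kernel S A) [IsMarkovKernel π] :
    IsMarkovKernel (stateAction π) := by
  unfold stateAction; infer_instance

instance saStep.isMarkov (π : Kernel S A) [IsMarkovKernel π]
    (T : Kernel (S × A) S) [IsMarkovKernel T] : IsMarkovKernel (saStep π T) := by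
  unfold saStep; infer_instance

instance saDist.isMarkov (π : Kernel S A) [IsMarkovKernel π]
    (T : Kernel (S × A) S) [IsMarkovKernel T] (n : ℕ) : IsMarkovKernel (saDist π T n) := by
  induction n with
  | zero => show IsMarkovKernel (stateAction π); infer_instance
  | succ n ih => show IsMarkovKernel ((saStep π T) ∘ₖ saDist π T n); infer_instance

lemma saDist_succ (π : Kernel S A) [IsMarkovKernel π]
    (T : Kernel (S × A) S) [IsMarkovKernel T] (n : ℕ) :
    saDist π T (n + 1) = (saDist π T n ∘ₖ T) ∘ₖ stateAction π := by
  induction n with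
  | zero => rfl
  | succ n ih =>
    show saStep π T ∘ₖ saDist π T (n + 1) = (saDist π T (n + 1) ∘ₖ T) ∘ₖ stateAction π
    conv_rhs => rw [show saDist π T (n + 1) = saStep π T ∘ₖ saDist π T n from rfl]
    rw [ih, Kernel.comp_assoc (saStep π T) (saDist π T n) T,
      Kernel.comp_assoc (saStep π T) (saDist π T n ∘ₖ T) (stateAction π)]

lemma integral_stateAction_of_meas (π : Kernel S A) [IsMarkovKernel π] (s : S)
    {f : S × A → ℝ} (hf : Measurable f) :
    ∫ x, f x ∂(stateAction π s) = ∫ a, f (s, a) ∂(π s) := by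
  rw [stateAction, Kernel.prod_apply, Kernel.id_apply, Measure.dirac_prod,
    integral_map measurable_prodMk_left.aemeasurable hf.aestronglyMeasurable]

end Aux

theorem bellman_consistency
    (T : Kernel (S × A) S) [IsMarkovKernel T] (π : Kernel S A) [IsMarkovKernel π]
    (r : S × A → ℝ) (hr_meas : Measurable r) (C : ℝ) (hr_bdd : ∀ x, |r x| ≤ C)
    (γ : ℝ) (hγ0 : 0 ≤ γ) (hγ1 : γ < 1) (s : S) :
    value π T r γ s
      = ∫ a, (r (s, a) + γ * ∫ s', value π T r γ s' ∂(T (s, a))) ∂(π s) := by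
  -- notation and basic facts
  set g : ℕ → S → ℝ := fun n s' => ∫ x, r x ∂(saDist π T n s') with hg_def
  have hAne : Nonempty A := by
    by_contra h
    rw [not_nonempty_iff] at h
    have h1 : (π s) Set.univ = 1 := measure_univ
    rw [Set.univ_eq_empty_iff.mpr (by infer_instance)] at h1
    simp at h1
  have hC : 0 ≤ C := le_trans (abs_nonneg _) (hr_bdd (s, Classical.arbitrary A))
  have hg_meas : ∀ n, Measurable (g n) := fun n =>
    (MeasureTheory.StronglyMeasurable.integral_kernel_prod_right
      (κ := saDist π T n) (f := fun (_ : S) y => r y)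
      ((hr_meas.comp measurable_snd).stronglyMeasurable)).measurable
  have hg_bdd : ∀ n s', |g n s'| ≤ C := fun n s' => abs_integral_le_of_abs_le _ hr_bdd
  have hsum : ∀ s', Summable fun t : ℕ => γ ^ t * g t s' := by
    intro s'
    refine Summable.of_norm_bounded
      ((summable_geometric_of_lt_one hγ0 hγ1).mul_left C) (fun t => ?_)
    rw [Real.norm_eq_abs, abs_mul, abs_pow, abs_of_nonneg hγ0, mul_comm]
    exact mul_le_mul_of_nonneg_right (hg_bdd t s') (pow_nonneg hγ0 t)
  have hval_eq : ∀ s', value π T r γ s' = ∑' t : ℕ, γ ^ t * g t s' := fun _ => rfl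
  have hval_bdd : ∀ s', |value π T r γ s'| ≤ C * (1 - γ)⁻¹ := by
    intro s'
    rw [hval_eq]
    calc |∑' t : ℕ, γ ^ t * g t s'| ≤ ∑' t : ℕ, ‖γ ^ t * g t s'‖ := by
          simpa [Real.norm_eq_abs] using norm_tsum_le_tsum_norm (hsum s').norm
      _ ≤ ∑' t : ℕ, C * γ ^ t := by
          refine Summable.tsum_le_tsum (fun t => ?_) (hsum s').norm
            ((summable_geometric_of_lt_one hγ0 hγ1).mul_left C)
          rw [Real.norm_eq_abs, abs_mul, abs_pow, abs_of_nonneg hγ0, mul_comm]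
          exact mul_le_mul_of_nonneg_right (hg_bdd t s') (pow_nonneg hγ0 t)
      _ = C * (1 - γ)⁻¹ := by rw [tsum_mul_left, tsum_geometric_of_lt_one hγ0 hγ1]
  have hval_meas : Measurable (value π T r γ) := by
    refine measurable_of_tendsto_metrizable
      (f := fun n s' => ∑ t ∈ Finset.range n, γ ^ t * g t s')
      (fun n => Finset.measurable_sum _ fun t _ => (hg_meas t).const_mul _) ?_
    rw [tendsto_pi_nhds]
    intro s'
    simpa [hval_eq] using (hsum s').hasSum.tendsto_sum_nat
  -- the recursion for `g`
  have hg_succ : ∀ (n : ℕ) (s' : S),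
      g (n + 1) s' = ∫ a, ∫ s'', g n s'' ∂(T (s', a)) ∂(π s') := by
    intro n s'
    have h1 : g (n + 1) s'
        = ∫ x, (∫ y, r y ∂((saDist π T n ∘ₖ T) x)) ∂(stateAction π s') := by
      show ∫ x, r x ∂(saDist π T (n + 1) s') = _
      rw [saDist_succ]
      exact integral_comp_of_bdd _ _ _ hr_meas hr_bdd
    have hmeas_inner : Measurable fun x : S × A => ∫ y, r y ∂((saDist π T n ∘ₖ T) x) :=
      (MeasureTheory.StronglyMeasurable.integral_kernel_prod_right
        (κ := saDist π T n ∘ₖ T) (f := fun (_ : S × A) y => r y)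
        ((hr_meas.comp measurable_snd).stronglyMeasurable)).measurable
    rw [h1, integral_stateAction_of_meas π s' hmeas_inner]
    exact integral_congr_ae (Filter.Eventually.of_forall fun a =>
      integral_comp_of_bdd _ _ _ hr_meas hr_bdd)
  -- split off the first term
  have hsplit : value π T r γ s = g 0 s + ∑' n : ℕ, γ ^ (n + 1) * g (n + 1) s := by
    rw [hval_eq, Summable.tsum_eq_zero_add (hsum s), pow_zero, one_mul]
  have hg0 : g 0 s = ∫ a, r (s, a) ∂(π s) := by
    show ∫ x, r x ∂(stateAction π s) = _
    exact integral_stateAction_of_meas π s hr_meas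
  -- the tail
  have hTmeas : ∀ n : ℕ, Measurable fun a : A => ∫ s', g n s' ∂(T (s, a)) := fun n =>
    (MeasureTheory.StronglyMeasurable.integral_kernel_prod_right'' (η := T) (a := s)
      (f := fun p : A × S => g n p.2)
      (((hg_meas n).comp measurable_snd).stronglyMeasurable)).measurable
  have hTbdd : ∀ (n : ℕ) (a : A), |∫ s', g n s' ∂(T (s, a))| ≤ C := fun n a =>
    abs_integral_le_of_abs_le _ (hg_bdd n)
  have key : ∑' n : ℕ, γ ^ (n + 1) * g (n + 1) s
      = ∫ a, γ * ∫ s', value π T r γ s' ∂(T (s, a)) ∂(π s) := by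
    set F : ℕ → A → ℝ := fun n a => γ ^ (n + 1) * ∫ s', g n s' ∂(T (s, a)) with hF_def
    have hF_bdd : ∀ (n : ℕ) (a : A), |F n a| ≤ C * γ ^ (n + 1) := by
      intro n a
      rw [hF_def]
      simp only [abs_mul, abs_pow, abs_of_nonneg hγ0, mul_comm (γ ^ (n + 1))]
      exact mul_le_mul_of_nonneg_right (hTbdd n a) (pow_nonneg hγ0 _)
    have hF_int : ∀ n : ℕ, Integrable (F n) (π s) := fun n =>
      integrable_of_abs_le _ ((hTmeas n).const_mul _).aestronglyMeasurable (hF_bdd n)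
    have hgeo : Summable fun n : ℕ => C * γ ^ (n + 1) := by
      refine Summable.congr (((summable_geometric_of_lt_one hγ0 hγ1).mul_left (C * γ)))
        (fun n => ?_)
      rw [pow_succ]; ring
    have hF_norm_sum : Summable fun n : ℕ => ∫ a, ‖F n a‖ ∂(π s) := by
      refine Summable.of_nonneg_of_le (fun n => integral_nonneg fun a => norm_nonneg _)
        (fun n => ?_) hgeo
      calc ∫ a, ‖F n a‖ ∂(π s) ≤ ∫ _, C * γ ^ (n + 1) ∂(π s) := by
            refine integral_mono (hF_int n).norm (integrable_const _) (fun a => ?_)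
            simpa [Real.norm_eq_abs] using hF_bdd n a
        _ = C * γ ^ (n + 1) := by simp
    calc ∑' n : ℕ, γ ^ (n + 1) * g (n + 1) s
        = ∑' n : ℕ, ∫ a, F n a ∂(π s) := by
          refine tsum_congr fun n => ?_
          rw [hg_succ n s]
          exact (integral_const_mul _ _).symm
      _ = ∫ a, (∑' n : ℕ, F n a) ∂(π s) :=
          integral_tsum_of_summable_integral_norm hF_int hF_norm_sum
      _ = ∫ a, γ * ∫ s', value π T r γ s' ∂(T (s, a)) ∂(π s) := by
          refine integral_congr_ae (Filter.Eventually.of_forall fun a => ?_)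
          beta_reduce
          have hG_int : ∀ n : ℕ, Integrable (fun s' => γ ^ (n + 1) * g n s') (T (s, a)) :=
            fun n => integrable_of_abs_le _
              ((hg_meas n).const_mul _).aestronglyMeasurable (C := C * γ ^ (n + 1))
              (fun s' => by
                simp only [abs_mul, abs_pow, abs_of_nonneg hγ0, mul_comm (γ ^ (n + 1))]
                exact mul_le_mul_of_nonneg_right (hg_bdd n s') (pow_nonneg hγ0 _))
          have hG_norm_sum :
              Summable fun n : ℕ => ∫ s', ‖γ ^ (n + 1) * g n s'‖ ∂(T (s, a)) := by
            refine Summable.of_nonneg_of_le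
              (fun n => integral_nonneg fun s' => norm_nonneg _) (fun n => ?_) hgeo
            calc ∫ s', ‖γ ^ (n + 1) * g n s'‖ ∂(T (s, a))
                ≤ ∫ _, C * γ ^ (n + 1) ∂(T (s, a)) := by
                  refine integral_mono (hG_int n).norm (integrable_const _) (fun s' => ?_)
                  simp only [Real.norm_eq_abs, abs_mul, abs_pow, abs_of_nonneg hγ0,
                    mul_comm (γ ^ (n + 1))]
                  exact mul_le_mul_of_nonneg_right (hg_bdd n s') (pow_nonneg hγ0 _)
              _ = C * γ ^ (n + 1) := by simp
          calc ∑' n : ℕ, F n a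
              = ∑' n : ℕ, ∫ s', γ ^ (n + 1) * g n s' ∂(T (s, a)) := by
                refine tsum_congr fun n => ?_
                exact (integral_const_mul _ _).symm
            _ = ∫ s', (∑' n : ℕ, γ ^ (n + 1) * g n s') ∂(T (s, a)) :=
                integral_tsum_of_summable_integral_norm hG_int hG_norm_sum
            _ = ∫ s', γ * value π T r γ s' ∂(T (s, a)) := by
                refine integral_congr_ae (Filter.Eventually.of_forall fun s' => ?_)
                beta_reduce
                rw [hval_eq, ← tsum_mul_left]
                refine tsum_congr fun n => ?_
                rw [pow_succ]; ring
            _ = γ * ∫ s', value π T r γ s' ∂(T (s, a)) := integral_const_mul _ _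
  -- put everything together
  have h2 : Integrable (fun a => γ * ∫ s', value π T r γ s' ∂(T (s, a))) (π s) := by
    refine integrable_of_abs_le _ ?_ (C := γ * (C * (1 - γ)⁻¹)) (fun a => ?_)
    · exact (((MeasureTheory.StronglyMeasurable.integral_kernel_prod_right'' (η := T) (a := s)
        (f := fun p : A × S => value π T r γ p.2)
        ((hval_meas.comp measurable_snd).stronglyMeasurable)).measurable).const_mul
          _).aestronglyMeasurable
    · rw [abs_mul, abs_of_nonneg hγ0]
      exact mul_le_mul_of_nonneg_left (abs_integral_le_of_abs_le _ hval_bdd) hγ0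
  have h1 : Integrable (fun a => r (s, a)) (π s) :=
    integrable_of_abs_le _ (hr_meas.comp measurable_prodMk_left).aestronglyMeasurable
      (fun a => hr_bdd (s, a))
  rw [hsplit, hg0, key, ← integral_add h1 h2]
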